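/- Let d ≥ 2 and ω ∈ C¹(ℝ^d, ℝ) with ω(0) = 0, ∇ω(0) = 0 and ∇ω(v) ≠ 0 for all v ≠ 0. For every v̄ ∈ ℝ^d \ {0}, there exist a bounded neighborhood U ⊂ ℝ^d \ {0} of v̄, a neighborhood V ⊂ ℝ^{d-1} of 0, and ψ ∈ C¹(ℝ^d × ℝ^{d-1}, ℝ^d) such that for all v ∈ U, σ ∈ V: ψ(v,0) = 0, ω(v) + ω(ψ(v,σ)) = ω(v + ψ(v,σ)), and rank(D_σψ(v,0)) = d − 1. -/

import Mathlib

open Module Topology Filter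
set_option maxHeartbeats 1000000

theorem exists_equiv (d : ℕ) (hd : 1 ≤ d) (ℓ : (Fin d → ℝ) →L[ℝ] ℝ) (hℓ : ℓ ≠ 0) :
    ∃ e : (Fin d → ℝ) ≃L[ℝ] (Fin (d-1) → ℝ) × ℝ, ∀ w, (e w).2 = ℓ w := by
  obtain ⟨x, hx⟩ : ∃ x, ℓ x ≠ 0 := by
    by_contra h
    push_neg at h
    exact hℓ (ContinuousLinearMap.ext fun w => by simp [h w])
  set u₀ : Fin d → ℝ := (ℓ x)⁻¹ • x with hu₀def
  have hu₀ : ℓ u₀ = 1 := by simp [hu₀def, inv_mul_cancel₀ hx]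
  set L : (Fin d → ℝ) →ₗ[ℝ] ℝ := (ℓ : (Fin d → ℝ) →ₗ[ℝ] ℝ)
  have hLu₀ : L u₀ = 1 := hu₀
  have hsurj : Function.Surjective L := fun t => ⟨t • u₀, by simp [hLu₀]⟩
  have hker : finrank ℝ (LinearMap.ker L) = d - 1 := by
    have h1 := LinearMap.finrank_range_add_finrank_ker L
    rw [LinearMap.range_eq_top.2 hsurj, finrank_top, finrank_fin_fun, finrank_self] at h1
    omega
  have q : (LinearMap.ker L) ≃ₗ[ℝ] (Fin (d-1) → ℝ) :=
    LinearEquiv.ofFinrankEq _ _ (by rw [hker, finrank_fin_fun])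
  -- the projection onto ker L
  have hmem : ∀ w, w - L w • u₀ ∈ LinearMap.ker L := fun w => by
    simp [LinearMap.mem_ker, map_sub, map_smul, hLu₀]
  set π : (Fin d → ℝ) →ₗ[ℝ] (LinearMap.ker L) :=
    LinearMap.codRestrict (LinearMap.ker L) (LinearMap.id - L.smulRight u₀) (fun w => hmem w)
  set f : (Fin d → ℝ) →ₗ[ℝ] ((Fin (d-1) → ℝ) × ℝ) := (q.toLinearMap.comp π).prod L
  set g : ((Fin (d-1) → ℝ) × ℝ) →ₗ[ℝ] (Fin d → ℝ) :=
    (LinearMap.ker L).subtype.comp (q.symm.toLinearMap.comp (LinearMap.fst ℝ _ _))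
      + (LinearMap.snd ℝ _ _).smulRight u₀
  have hfg : f.comp g = LinearMap.id := by
    apply LinearMap.ext
    rintro ⟨σ, t⟩
    have h1 : L ((q.symm σ : Fin d → ℝ) + t • u₀) = t := by
      have : L (q.symm σ : Fin d → ℝ) = 0 := (q.symm σ).2
      simp [map_add, map_smul, this, hLu₀]
    have h2 : π ((q.symm σ : Fin d → ℝ)) = q.symm σ := by
      apply Subtype.ext
      have : L (q.symm σ : Fin d → ℝ) = 0 := (q.symm σ).2
      simp [π, LinearMap.codRestrict, this]
    have h3 : π u₀ = 0 := by
      apply Subtype.ext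
      simp [π, LinearMap.codRestrict, hLu₀]
    simp [f, g, map_add, map_smul, h2, h3, hLu₀]
  have hgf : g.comp f = LinearMap.id := by
    apply LinearMap.ext
    intro w
    simp [f, g, π, LinearMap.codRestrict]
    try abel
  set e₀ : (Fin d → ℝ) ≃ₗ[ℝ] ((Fin (d-1) → ℝ) × ℝ) := LinearEquiv.ofLinear f g hfg hgf
  refine ⟨e₀.toContinuousLinearEquiv, fun w => ?_⟩
  rfl

theorem stmt_14 (d : ℕ) (hd : 2 ≤ d) (ω : (Fin d → ℝ) → ℝ)
    (hω : ContDiff ℝ 1 ω) (hω0 : ω 0 = 0) (hdω0 : fderiv ℝ ω 0 = 0)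
    (hdω : ∀ v : Fin d → ℝ, v ≠ 0 → fderiv ℝ ω v ≠ 0)
    (v₀ : Fin d → ℝ) (hv₀ : v₀ ≠ 0) :
    ∃ (U : Set (Fin d → ℝ)) (V : Set (Fin (d - 1) → ℝ))
      (ψ : (Fin d → ℝ) → (Fin (d - 1) → ℝ) → (Fin d → ℝ)),
      IsOpen U ∧ v₀ ∈ U ∧ Bornology.IsBounded U ∧ U ⊆ {v : Fin d → ℝ | v ≠ 0} ∧
      IsOpen V ∧ (0 : Fin (d - 1) → ℝ) ∈ V ∧
      ContDiff ℝ 1 (fun p : (Fin d → ℝ) × (Fin (d - 1) → ℝ) => ψ p.1 p.2) ∧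
      (∀ v ∈ U, ψ v 0 = 0 ∧
        ∀ σ ∈ V, ω v + ω (ψ v σ) = ω (v + ψ v σ)) ∧
      (∀ v ∈ U,
        LinearMap.rank
          ((fderiv ℝ (fun σ => ψ v σ) 0 : (Fin (d - 1) → ℝ) →L[ℝ] (Fin d → ℝ)) :
            (Fin (d - 1) → ℝ) →ₗ[ℝ] (Fin d → ℝ)) = ((d - 1 : ℕ) : Cardinal)) := by
  classical
  set ℓ : (Fin d → ℝ) →L[ℝ] ℝ := fderiv ℝ ω v₀ with hℓdef
  have hℓ : ℓ ≠ 0 := hdω v₀ hv₀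
  obtain ⟨e, he⟩ := exists_equiv d (by omega) ℓ hℓ
  set Ψ : (Fin d → ℝ) × (Fin d → ℝ) → ℝ := fun p => ω (p.1 + p.2) - ω p.1 - ω p.2 with hΨdef
  set G : (Fin d → ℝ) × (Fin d → ℝ) → (Fin d → ℝ) × ((Fin (d-1) → ℝ) × ℝ) :=
    fun p => (p.1, ((e p.2).1, Ψ p)) with hGdef
  have hωdiff : Differentiable ℝ ω := hω.differentiable one_ne_zero
  -- G is C¹
  have hGsmooth : ContDiff ℝ 1 G := by
    refine contDiff_fst.prodMk (ContDiff.prodMk ?_ ?_)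
    · exact contDiff_fst.comp ((e.contDiff.of_le le_top).comp contDiff_snd)
    · exact ((hω.comp (contDiff_fst.add contDiff_snd)).sub (hω.comp contDiff_fst)).sub
        (hω.comp contDiff_snd)
  -- derivative of G at (v₀, 0)
  set A : ((Fin d → ℝ) × (Fin d → ℝ)) ≃L[ℝ] ((Fin d → ℝ) × ((Fin (d-1) → ℝ) × ℝ)) :=
    (ContinuousLinearEquiv.refl ℝ (Fin d → ℝ)).prodCongr e with hAdef
  set B : ((Fin d → ℝ) × (Fin d → ℝ)) →L[ℝ] (Fin (d-1) → ℝ) :=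
    (ContinuousLinearMap.fst ℝ (Fin (d-1) → ℝ) ℝ).comp
      ((e : (Fin d → ℝ) →L[ℝ] (Fin (d-1) → ℝ) × ℝ).comp
        (ContinuousLinearMap.snd ℝ (Fin d → ℝ) (Fin d → ℝ))) with hBdef
  have hGA : HasFDerivAt G
      (A : ((Fin d → ℝ) × (Fin d → ℝ)) →L[ℝ] ((Fin d → ℝ) × ((Fin (d-1) → ℝ) × ℝ))) (v₀, 0) := by
    have hfst := hasFDerivAt_fst (𝕜 := ℝ) (p := ((v₀, 0) : (Fin d → ℝ) × (Fin d → ℝ)))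
    have hsnd := hasFDerivAt_snd (𝕜 := ℝ) (p := ((v₀, 0) : (Fin d → ℝ) × (Fin d → ℝ)))
    have hω₁ : HasFDerivAt ω (ℓ : (Fin d → ℝ) →L[ℝ] ℝ) v₀ := (hωdiff v₀).hasFDerivAt
    have hω₂ : HasFDerivAt ω (0 : (Fin d → ℝ) →L[ℝ] ℝ) 0 := by
      have := (hωdiff 0).hasFDerivAt
      rwa [hdω0] at this
    have hadd : HasFDerivAt (fun p : (Fin d → ℝ) × (Fin d → ℝ) => p.1 + p.2)
        (ContinuousLinearMap.fst ℝ (Fin d → ℝ) (Fin d → ℝ) +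
          ContinuousLinearMap.snd ℝ (Fin d → ℝ) (Fin d → ℝ)) (v₀, 0) :=
      (ContinuousLinearMap.fst ℝ (Fin d → ℝ) (Fin d → ℝ) +
          ContinuousLinearMap.snd ℝ (Fin d → ℝ) (Fin d → ℝ)).hasFDerivAt
    have hω₁' : HasFDerivAt ω (ℓ : (Fin d → ℝ) →L[ℝ] ℝ)
        ((fun p : (Fin d → ℝ) × (Fin d → ℝ) => p.1 + p.2) (v₀, 0)) := by
      simpa using hω₁
    have h1 : HasFDerivAt (fun p : (Fin d → ℝ) × (Fin d → ℝ) => ω (p.1 + p.2))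
        (ℓ.comp (ContinuousLinearMap.fst ℝ (Fin d → ℝ) (Fin d → ℝ) +
          ContinuousLinearMap.snd ℝ (Fin d → ℝ) (Fin d → ℝ))) (v₀, 0) :=
      hω₁'.comp (v₀, 0) hadd
    have h2 : HasFDerivAt (fun p : (Fin d → ℝ) × (Fin d → ℝ) => ω p.1)
        (ℓ.comp (ContinuousLinearMap.fst ℝ (Fin d → ℝ) (Fin d → ℝ))) (v₀, 0) :=
      hω₁.comp (v₀, 0) hfst
    have h3 : HasFDerivAt (fun p : (Fin d → ℝ) × (Fin d → ℝ) => ω p.2)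
        ((0 : (Fin d → ℝ) →L[ℝ] ℝ).comp
          (ContinuousLinearMap.snd ℝ (Fin d → ℝ) (Fin d → ℝ))) (v₀, 0) :=
      hω₂.comp (v₀, 0) hsnd
    have hΨ' : HasFDerivAt Ψ
        (ℓ.comp (ContinuousLinearMap.fst ℝ (Fin d → ℝ) (Fin d → ℝ) +
          ContinuousLinearMap.snd ℝ (Fin d → ℝ) (Fin d → ℝ)) -
          ℓ.comp (ContinuousLinearMap.fst ℝ (Fin d → ℝ) (Fin d → ℝ)) -
          (0 : (Fin d → ℝ) →L[ℝ] ℝ).comp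
            (ContinuousLinearMap.snd ℝ (Fin d → ℝ) (Fin d → ℝ))) (v₀, 0) :=
      (h1.sub h2).sub h3
    have hBf : HasFDerivAt (fun p : (Fin d → ℝ) × (Fin d → ℝ) => (e p.2).1) B (v₀, 0) :=
      B.hasFDerivAt
    have hG0 : HasFDerivAt G
        ((ContinuousLinearMap.fst ℝ (Fin d → ℝ) (Fin d → ℝ)).prod (B.prod
          (ℓ.comp (ContinuousLinearMap.fst ℝ (Fin d → ℝ) (Fin d → ℝ) +
            ContinuousLinearMap.snd ℝ (Fin d → ℝ) (Fin d → ℝ)) -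
            ℓ.comp (ContinuousLinearMap.fst ℝ (Fin d → ℝ) (Fin d → ℝ)) -
            (0 : (Fin d → ℝ) →L[ℝ] ℝ).comp
              (ContinuousLinearMap.snd ℝ (Fin d → ℝ) (Fin d → ℝ))))) (v₀, 0) :=
      hfst.prodMk (hBf.prodMk hΨ')
    have heq : ((ContinuousLinearMap.fst ℝ (Fin d → ℝ) (Fin d → ℝ)).prod (B.prod
          (ℓ.comp (ContinuousLinearMap.fst ℝ (Fin d → ℝ) (Fin d → ℝ) +
            ContinuousLinearMap.snd ℝ (Fin d → ℝ) (Fin d → ℝ)) -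
            ℓ.comp (ContinuousLinearMap.fst ℝ (Fin d → ℝ) (Fin d → ℝ)) -
            (0 : (Fin d → ℝ) →L[ℝ] ℝ).comp
              (ContinuousLinearMap.snd ℝ (Fin d → ℝ) (Fin d → ℝ)))))
        = (A : ((Fin d → ℝ) × (Fin d → ℝ)) →L[ℝ] ((Fin d → ℝ) × ((Fin (d-1) → ℝ) × ℝ))) := by
      apply ContinuousLinearMap.ext
      rintro ⟨u, w⟩
      have h2 : (e w).2 = ℓ w := he w
      simp [hAdef, hBdef, map_add, Prod.ext_iff, h2]
    rw [heq] at hG0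
    exact hG0
  -- local inverse
  have hGc : ContDiffAt ℝ 1 G (v₀, 0) := hGsmooth.contDiffAt
  have hS : HasStrictFDerivAt G
      (A : ((Fin d → ℝ) × (Fin d → ℝ)) →L[ℝ] ((Fin d → ℝ) × ((Fin (d-1) → ℝ) × ℝ))) (v₀, 0) :=
    hGc.hasStrictFDerivAt' hGA one_ne_zero
  set H := hS.localInverse G A (v₀, 0) with hHdef
  have hG0 : G (v₀, 0) = (v₀, (0, 0)) := by
    simp [hGdef, hΨdef, hω0, Prod.ext_iff]
  have hHc : ContDiffAt ℝ 1 H (v₀, (0, 0)) := by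
    have := hGc.to_localInverse hGA one_ne_zero
    rwa [hG0] at this
  obtain ⟨W₀, hW₀nhds, hW₀cd⟩ := hHc.contDiffOn le_rfl (by simp)
  obtain ⟨W, hWsub, hWopen, hWmem⟩ := mem_nhds_iff.mp hW₀nhds
  have hWcd : ContDiffOn ℝ 1 H W := hW₀cd.mono hWsub
  set j : (Fin d → ℝ) × (Fin (d-1) → ℝ) → (Fin d → ℝ) × ((Fin (d-1) → ℝ) × ℝ) :=
    fun p => (p.1, (p.2, 0)) with hjdef
  have hjsm : ContDiff ℝ 1 j := contDiff_fst.prodMk (contDiff_snd.prodMk contDiff_const)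
  set ψloc : (Fin d → ℝ) × (Fin (d-1) → ℝ) → (Fin d → ℝ) := fun p => (H (j p)).2 with hψlocdef
  set O₁ : Set ((Fin d → ℝ) × (Fin (d-1) → ℝ)) := j ⁻¹' W with hO₁def
  have hO₁open : IsOpen O₁ := hWopen.preimage hjsm.continuous
  have hψlocO : ContDiffOn ℝ 1 ψloc O₁ :=
    contDiff_snd.comp_contDiffOn (hWcd.comp hjsm.contDiffOn (fun p hp => hp))
  have hO₁mem : (v₀, (0 : Fin (d-1) → ℝ)) ∈ O₁ := by
    simpa [hO₁def, hjdef] using hWmem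
  have hrt : ∀ᶠ p in 𝓝 ((v₀, (0 : Fin (d-1) → ℝ))), G (H (j p)) = j p := by
    have h1 : ∀ᶠ y in 𝓝 (G (v₀, 0)), G (H y) = y := hS.eventually_right_inverse
    rw [hG0] at h1
    have hjt : Filter.Tendsto j (𝓝 (v₀, (0 : Fin (d-1) → ℝ)))
        (𝓝 (v₀, ((0 : Fin (d-1) → ℝ), (0 : ℝ)))) := by
      have := hjsm.continuous.continuousAt (x := (v₀, (0 : Fin (d-1) → ℝ)))
      simpa [hjdef, ContinuousAt] using this
    exact hjt.eventually h1
  have hlf : ∀ᶠ v in 𝓝 v₀, ψloc (v, 0) = 0 := by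
    have h1 : ∀ᶠ x in 𝓝 ((v₀, 0) : (Fin d → ℝ) × (Fin d → ℝ)), H (G x) = x :=
      hS.eventually_left_inverse
    have hic : Filter.Tendsto (fun v : Fin d → ℝ => ((v, 0) : (Fin d → ℝ) × (Fin d → ℝ)))
        (𝓝 v₀) (𝓝 ((v₀, 0) : (Fin d → ℝ) × (Fin d → ℝ))) :=
      (continuous_id.prodMk continuous_const).continuousAt
    filter_upwards [hic.eventually h1] with v hv
    have hGv0 : G (v, 0) = j (v, 0) := by simp [hGdef, hjdef, hΨdef, hω0]
    show (H (j (v, 0))).2 = 0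
    rw [← hGv0, hv]
  have hN : {p | G (H (j p)) = j p} ∩ O₁ ∈ 𝓝 ((v₀, (0 : Fin (d-1) → ℝ))) :=
    Filter.inter_mem hrt (hO₁open.mem_nhds hO₁mem)
  obtain ⟨ε, hε, hball⟩ := Metric.mem_nhds_iff.mp hN
  set χ : ContDiffBump ((v₀, (0 : Fin (d-1) → ℝ))) := ⟨ε/3, ε/2, by positivity, by linarith⟩
    with hχdef
  have htsup : tsupport (χ : _ → ℝ) ⊆ O₁ := by
    rw [χ.tsupport_eq]
    intro p hp
    have : p ∈ Metric.ball ((v₀, (0 : Fin (d-1) → ℝ))) ε :=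
      Metric.closedBall_subset_ball (by simp [hχdef]; linarith) hp
    exact (hball this).2
  set ψ : (Fin d → ℝ) → (Fin (d-1) → ℝ) → (Fin d → ℝ) :=
    fun v σ => χ (v, σ) • ψloc (v, σ) with hψdef
  have hψsm : ContDiff ℝ 1 (fun p : (Fin d → ℝ) × (Fin (d-1) → ℝ) => ψ p.1 p.2) := by
    rw [contDiff_iff_contDiffAt]
    intro p
    by_cases hp : p ∈ tsupport (χ : _ → ℝ)
    · have hpO : p ∈ O₁ := htsup hp
      have h1 : ContDiffAt ℝ 1 (χ : _ → ℝ) p := χ.contDiff.contDiffAt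
      have h2 : ContDiffAt ℝ 1 ψloc p := hψlocO.contDiffAt (hO₁open.mem_nhds hpO)
      exact h1.smul h2
    · have hev : (fun q : (Fin d → ℝ) × (Fin (d-1) → ℝ) => ψ q.1 q.2) =ᶠ[𝓝 p]
          (fun _ => (0 : Fin d → ℝ)) := by
        filter_upwards [(isClosed_tsupport _).isOpen_compl.mem_nhds hp] with q hq
        simp [hψdef, image_eq_zero_of_notMem_tsupport hq]
      exact (contDiffAt_const (c := (0 : Fin d → ℝ))).congr_of_eventuallyEq hev
  obtain ⟨ε₂, hε₂, hball₂⟩ := Metric.mem_nhds_iff.mp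
    (Filter.inter_mem hlf (IsOpen.mem_nhds isOpen_ne hv₀))
  set r : ℝ := min (ε/3) ε₂ with hrdef
  have hr : 0 < r := lt_min (by positivity) hε₂
  have hmemP : ∀ v σ, v ∈ Metric.ball v₀ r → σ ∈ Metric.ball (0 : Fin (d-1) → ℝ) r →
      (v, σ) ∈ Metric.ball ((v₀, (0 : Fin (d-1) → ℝ))) r := by
    intro v σ h1 h2
    rw [Metric.mem_ball, Prod.dist_eq]
    exact max_lt (Metric.mem_ball.mp h1) (Metric.mem_ball.mp h2)
  have hgood : ∀ v ∈ Metric.ball v₀ r, ∀ σ ∈ Metric.ball (0 : Fin (d-1) → ℝ) r,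
      ((v, σ) ∈ O₁ ∧ G (H (j (v, σ))) = j (v, σ)) ∧ χ (v, σ) = 1 := by
    intro v hv σ hσ
    have hp := hmemP v σ hv hσ
    have hε' : (v, σ) ∈ Metric.ball ((v₀, (0 : Fin (d-1) → ℝ))) ε :=
      Metric.ball_subset_ball (le_trans (min_le_left _ _) (by linarith)) hp
    refine ⟨⟨(hball hε').2, (hball hε').1⟩, ?_⟩
    refine χ.one_of_mem_closedBall (Metric.mem_closedBall.mpr ?_)
    have := lt_of_lt_of_le (Metric.mem_ball.mp hp) (min_le_left _ _)
    simpa [hχdef] using this.le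
  refine ⟨Metric.ball v₀ r, Metric.ball 0 r, ψ, Metric.isOpen_ball,
    Metric.mem_ball_self hr, Metric.isBounded_ball, ?_, Metric.isOpen_ball,
    Metric.mem_ball_self hr, hψsm, ?_, ?_⟩
  · intro v hv
    exact (hball₂ (Metric.ball_subset_ball (min_le_right _ _) hv)).2
  · intro v hv
    have hv2 := hball₂ (Metric.ball_subset_ball (min_le_right _ _) hv)
    constructor
    · have hχ1 : χ (v, 0) = 1 :=
        (hgood v hv 0 (Metric.mem_ball_self hr)).2
      show χ (v, 0) • ψloc (v, 0) = 0
      rw [hχ1, hv2.1, smul_zero]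
    · intro σ hσ
      have hg := hgood v hv σ hσ
      have hψeq : ψ v σ = ψloc (v, σ) := by
        show χ (v, σ) • ψloc (v, σ) = ψloc (v, σ)
        rw [hg.2, one_smul]
      have hGH := hg.1.2
      have h1 : (H (j (v, σ))).1 = v := congrArg Prod.fst hGH
      have h2 : Ψ (H (j (v, σ))) = 0 := by
        have := congrArg (fun y : (Fin d → ℝ) × ((Fin (d-1) → ℝ) × ℝ) => y.2.2) hGH
        simpa [hGdef, hjdef] using this
      have h3 : ω ((H (j (v, σ))).1 + (H (j (v, σ))).2) - ω (H (j (v, σ))).1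
          - ω (H (j (v, σ))).2 = 0 := h2
      rw [h1] at h3
      have h4 : ψ v σ = (H (j (v, σ))).2 := hψeq
      rw [h4]
      linarith
  · intro v hv
    have hVnhds : Metric.ball (0 : Fin (d-1) → ℝ) r ∈ 𝓝 (0 : Fin (d-1) → ℝ) :=
      Metric.ball_mem_nhds _ hr
    have hcd : ContDiffAt ℝ 1 ψloc (v, 0) :=
      hψlocO.contDiffAt (hO₁open.mem_nhds (hgood v hv 0 (Metric.mem_ball_self hr)).1.1)
    have hcurve : ContDiff ℝ 1 (fun σ : Fin (d-1) → ℝ => ((v, σ) : (Fin d → ℝ) × (Fin (d-1) → ℝ))) :=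
      contDiff_const.prodMk contDiff_id
    have hdiff : DifferentiableAt ℝ (fun σ => ψloc (v, σ)) 0 := by
      have := hcd.comp (x := (0 : Fin (d-1) → ℝ)) hcurve.contDiffAt
      exact this.differentiableAt one_ne_zero
    set D := fderiv ℝ (fun σ => ψloc (v, σ)) 0 with hDdef
    have hD : HasFDerivAt (fun σ => ψloc (v, σ)) D 0 := hdiff.hasFDerivAt
    have hevψ : (fun σ => ψ v σ) =ᶠ[𝓝 (0 : Fin (d-1) → ℝ)] (fun σ => ψloc (v, σ)) := by
      filter_upwards [hVnhds] with σ hσ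
      show χ (v, σ) • ψloc (v, σ) = ψloc (v, σ)
      rw [(hgood v hv σ hσ).2, one_smul]
    have hfd : fderiv ℝ (fun σ => ψ v σ) 0 = D := hevψ.fderiv_eq
    set B₂ : (Fin d → ℝ) →L[ℝ] (Fin (d-1) → ℝ) :=
      (ContinuousLinearMap.fst ℝ (Fin (d-1) → ℝ) ℝ).comp
        (e : (Fin d → ℝ) →L[ℝ] (Fin (d-1) → ℝ) × ℝ) with hB₂
    have hcompD : HasFDerivAt (fun σ => B₂ (ψloc (v, σ))) (B₂.comp D) 0 :=
      B₂.hasFDerivAt.comp 0 hD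
    have hevid : (fun σ => B₂ (ψloc (v, σ))) =ᶠ[𝓝 (0 : Fin (d-1) → ℝ)] (fun σ => σ) := by
      filter_upwards [hVnhds] with σ hσ
      have hGH := (hgood v hv σ hσ).1.2
      have := congrArg (fun y : (Fin d → ℝ) × ((Fin (d-1) → ℝ) × ℝ) => y.2.1) hGH
      simpa [hGdef, hjdef, hB₂] using this
    have hBD : B₂.comp D = ContinuousLinearMap.id ℝ (Fin (d-1) → ℝ) := by
      have h1 : HasFDerivAt (fun σ : Fin (d-1) → ℝ => σ) (B₂.comp D) 0 :=
        hcompD.congr_of_eventuallyEq hevid.symm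
      exact h1.unique (hasFDerivAt_id 0)
    have hinj : Function.Injective D := by
      intro a b hab
      have h2 : B₂ (D a) = B₂ (D b) := congrArg _ hab
      have h3 : (B₂.comp D) a = (B₂.comp D) b := h2
      rw [hBD] at h3
      exact h3
    rw [hfd]
    have hrk : LinearMap.rank (D : (Fin (d-1) → ℝ) →ₗ[ℝ] (Fin d → ℝ))
        = Module.rank ℝ (Fin (d-1) → ℝ) := by
      rw [LinearMap.rank]
      exact rank_range_of_injective _ hinj
    rw [hrk, rank_fin_fun]
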